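/- Let A, B, C be a triangle, A₁ the point strictly between B and C with ∠BAA₁ = ∠A₁AC, B₁ the point strictly between A and C with ∠ABB₁ = ∠B₁BC, and J a point lying on both segment AA₁ and segment BB₁. If dist J A₁ = dist J B₁ and dist A C ≠ dist B C, then ∠ACB = π/3. -/

import Mathlib

open EuclideanGeometry Real

variable {Pt : Type*} [NormedAddCommGroup Pt] [InnerProductSpace ℝ Pt]

lemma my_law_sin (p1 p2 p3 : Pt) :
    Real.sin (∠ p2 p1 p3) * (dist p1 p2 * dist p1 p3)
      = Real.sin (∠ p1 p2 p3) * (dist p2 p1 * dist p2 p3) := by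
  have h1 : ∠ p2 p1 p3 = InnerProductGeometry.angle (p2 - p1) (p3 - p1) := rfl
  have h2 : ∠ p1 p2 p3 = InnerProductGeometry.angle (p1 - p2) (p3 - p2) := rfl
  have d1 : dist p1 p2 = ‖p2 - p1‖ := by rw [dist_eq_norm, norm_sub_rev]
  have d2 : dist p1 p3 = ‖p3 - p1‖ := by rw [dist_eq_norm, norm_sub_rev]
  have d3 : dist p2 p1 = ‖p1 - p2‖ := by rw [dist_eq_norm, norm_sub_rev]
  have d4 : dist p2 p3 = ‖p3 - p2‖ := by rw [dist_eq_norm, norm_sub_rev]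
  rw [h1, h2, d1, d2, d3, d4, InnerProductGeometry.sin_angle_mul_norm_mul_norm,
    InnerProductGeometry.sin_angle_mul_norm_mul_norm]
  congr 1
  set x : Pt := p1 - p2 with hx
  set y : Pt := p3 - p2 with hy
  have e1 : p2 - p1 = -x := by rw [hx]; abel
  have e2 : p3 - p1 = y - x := by rw [hx, hy]; abel
  rw [e1, e2]
  simp only [inner_sub_left, inner_sub_right, inner_neg_left, inner_neg_right,
    real_inner_comm y x]
  ring

lemma my_angle_ray {X A Q : Pt} {P : Pt} (h : Wbtw ℝ A P Q) (hPA : P ≠ A) :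
    ∠ X A P = ∠ X A Q := by
  obtain ⟨t, ⟨ht0, _⟩, rfl⟩ := h
  have ht : 0 < t := lt_of_le_of_ne ht0 (by rintro rfl; simp at hPA)
  have hv : (AffineMap.lineMap A Q t : Pt) -ᵥ A = t • (Q -ᵥ A) := by
    simp [AffineMap.lineMap_apply]
  show InnerProductGeometry.angle _ _ = _
  rw [hv]
  exact InnerProductGeometry.angle_smul_right_of_pos _ _ ht

lemma my_ncol_swap₁₂ {p q r : Pt} (h : ¬ Collinear ℝ ({p, q, r} : Set Pt)) :
    ¬ Collinear ℝ ({q, p, r} : Set Pt) := by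
  intro hc; rw [Set.insert_comm] at hc; exact h hc

lemma my_ncol_swap₂₃ {p q r : Pt} (h : ¬ Collinear ℝ ({p, q, r} : Set Pt)) :
    ¬ Collinear ℝ ({p, r, q} : Set Pt) := by
  intro hc; rw [Set.pair_comm] at hc; exact h hc

lemma my_sin_eq_sin {u v : ℝ} (hu0 : 0 < u) (hu1 : u < π) (hv0 : 0 < v) (hv1 : v < π)
    (h : Real.sin u = Real.sin v) : u = v ∨ u + v = π := by
  have hs : Real.sin ((u - v)/2) * Real.cos ((u + v)/2) = 0 := by
    have := Real.sin_sub_sin u v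
    have h0 : Real.sin u - Real.sin v = 0 := by rw [h]; ring
    nlinarith [this]
  rcases mul_eq_zero.1 hs with hz | hz
  · left
    have h1 : -π < (u - v)/2 := by linarith
    have h2 : (u - v)/2 < π := by linarith
    have := (Real.sin_eq_zero_iff_of_lt_of_lt h1 h2).1 hz
    linarith
  · right
    have h1 : (u + v)/2 ∈ Set.Icc 0 π := by constructor <;> [linarith; linarith]
    have h2 : (π/2 : ℝ) ∈ Set.Icc 0 π := by
      constructor <;> [positivity; linarith [Real.pi_pos]]
    have := Real.injOn_cos h1 h2 (by rw [hz, Real.cos_pi_div_two])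
    linarith

theorem stmt_10 (A B C A₁ B₁ J : EuclideanSpace ℝ (Fin 2))
    (hABC : ¬ Collinear ℝ ({A, B, C} : Set (EuclideanSpace ℝ (Fin 2))))
    (hA₁ : Sbtw ℝ B A₁ C) (hA₁' : ∠ B A A₁ = ∠ A₁ A C)
    (hB₁ : Sbtw ℝ A B₁ C) (hB₁' : ∠ A B B₁ = ∠ B₁ B C)
    (hJA : J ∈ segment ℝ A A₁) (hJB : J ∈ segment ℝ B B₁)
    (h : dist J A₁ = dist J B₁)
    (h2 : dist A C ≠ dist B C) :
    ∠ A C B = π / 3 := by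
  have hAB : A ≠ B := ne₁₂_of_not_collinear hABC
  have hAC : A ≠ C := ne₁₃_of_not_collinear hABC
  have hBC : B ≠ C := ne₂₃_of_not_collinear hABC
  have hA₁B : A₁ ≠ B := hA₁.ne_left
  have hA₁C : A₁ ≠ C := hA₁.ne_right
  have hB₁A : B₁ ≠ A := hB₁.ne_left
  have hB₁C : B₁ ≠ C := hB₁.ne_right
  have hA₁mem : A₁ ∈ line[ℝ, B, C] := hA₁.wbtw.mem_affineSpan
  have hB₁mem : B₁ ∈ line[ℝ, A, C] := hB₁.wbtw.mem_affineSpan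
  have hJwA : Wbtw ℝ A J A₁ := mem_segment_iff_wbtw.1 hJA
  have hJwB : Wbtw ℝ B J B₁ := mem_segment_iff_wbtw.1 hJB
  -- N1 : A, B, A₁ not collinear
  have N1 : ¬ Collinear ℝ ({A, B, A₁} : Set (EuclideanSpace ℝ (Fin 2))) := by
    intro hc
    have hmem : A ∈ line[ℝ, B, A₁] :=
      hc.mem_affineSpan_of_mem_of_ne (by simp) (by simp) (by simp) (Ne.symm hA₁B)
    have hle : line[ℝ, B, A₁] ≤ line[ℝ, B, C] :=
      affineSpan_pair_le_of_mem_of_mem (left_mem_affineSpan_pair _ _ _) hA₁mem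
    exact hABC (collinear_insert_of_mem_affineSpan_pair (hle hmem))
  -- N2 : A, B, B₁ not collinear
  have N2 : ¬ Collinear ℝ ({A, B, B₁} : Set (EuclideanSpace ℝ (Fin 2))) := by
    intro hc
    have hmem : B ∈ line[ℝ, A, B₁] :=
      hc.mem_affineSpan_of_mem_of_ne (by simp) (by simp) (by simp) (Ne.symm hB₁A)
    have hle : line[ℝ, A, B₁] ≤ line[ℝ, A, C] :=
      affineSpan_pair_le_of_mem_of_mem (left_mem_affineSpan_pair _ _ _) hB₁mem
    have hcol : Collinear ℝ ({B, A, C} : Set (EuclideanSpace ℝ (Fin 2))) :=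
      collinear_insert_of_mem_affineSpan_pair (hle hmem)
    rw [Set.insert_comm] at hcol
    exact hABC hcol
  have hA₁A : A₁ ≠ A := by
    intro he
    apply N1
    rw [he]
    exact (collinear_pair ℝ A B).subset (by intro x hx; simp at hx ⊢; tauto)
  have hB₁B : B₁ ≠ B := by
    intro he
    apply N2
    rw [he]
    exact (collinear_pair ℝ A B).subset (by intro x hx; simp at hx ⊢; tauto)
  have hJA' : J ≠ A := by
    intro he
    apply N2
    have : A ∈ line[ℝ, B, B₁] := he ▸ hJwB.mem_affineSpan
    exact collinear_insert_of_mem_affineSpan_pair this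
  have hJB' : J ≠ B := by
    intro he
    apply N1
    have hmem : B ∈ line[ℝ, A, A₁] := he ▸ hJwA.mem_affineSpan
    have hcol := collinear_insert_of_mem_affineSpan_pair hmem
    rw [Set.insert_comm] at hcol
    exact hcol
  have NBA₁B₁ : ¬ Collinear ℝ ({B, A₁, B₁} : Set (EuclideanSpace ℝ (Fin 2))) := by
    intro hc
    have hmem : B₁ ∈ line[ℝ, B, A₁] :=
      hc.mem_affineSpan_of_mem_of_ne (by simp) (by simp) (by simp) (Ne.symm hA₁B)
    have hle : line[ℝ, B, A₁] ≤ line[ℝ, B, C] :=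
      affineSpan_pair_le_of_mem_of_mem (left_mem_affineSpan_pair _ _ _) hA₁mem
    have hB₁BC : B₁ ∈ line[ℝ, B, C] := hle hmem
    have hAmem : A ∈ line[ℝ, B₁, C] :=
      (collinear_insert_of_mem_affineSpan_pair hB₁mem).mem_affineSpan_of_mem_of_ne
        (by simp) (by simp) (by simp) hB₁C
    have hle2 : line[ℝ, B₁, C] ≤ line[ℝ, B, C] :=
      affineSpan_pair_le_of_mem_of_mem hB₁BC (right_mem_affineSpan_pair _ _ _)
    exact hABC (collinear_insert_of_mem_affineSpan_pair (hle2 hAmem))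
  have NAB₁A₁ : ¬ Collinear ℝ ({A, B₁, A₁} : Set (EuclideanSpace ℝ (Fin 2))) := by
    intro hc
    have hmem : A₁ ∈ line[ℝ, A, B₁] :=
      hc.mem_affineSpan_of_mem_of_ne (by simp) (by simp) (by simp) (Ne.symm hB₁A)
    have hle : line[ℝ, A, B₁] ≤ line[ℝ, A, C] :=
      affineSpan_pair_le_of_mem_of_mem (left_mem_affineSpan_pair _ _ _) hB₁mem
    have hA₁AC : A₁ ∈ line[ℝ, A, C] := hle hmem
    have hBmem : B ∈ line[ℝ, A₁, C] :=
      (collinear_insert_of_mem_affineSpan_pair hA₁mem).mem_affineSpan_of_mem_of_ne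
        (by simp) (by simp) (by simp) hA₁C
    have hle2 : line[ℝ, A₁, C] ≤ line[ℝ, A, C] :=
      affineSpan_pair_le_of_mem_of_mem hA₁AC (right_mem_affineSpan_pair _ _ _)
    have hcol : Collinear ℝ ({B, A, C} : Set (EuclideanSpace ℝ (Fin 2))) :=
      collinear_insert_of_mem_affineSpan_pair (hle2 hBmem)
    rw [Set.insert_comm] at hcol
    exact hABC hcol
  have hJA₁ : J ≠ A₁ := by
    intro he
    apply NBA₁B₁
    have hmem : A₁ ∈ line[ℝ, B, B₁] := he ▸ hJwB.mem_affineSpan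
    have hcol := collinear_insert_of_mem_affineSpan_pair hmem
    rw [Set.insert_comm] at hcol
    exact hcol
  have hJB₁ : J ≠ B₁ := by
    intro he
    apply NAB₁A₁
    have hmem : B₁ ∈ line[ℝ, A, A₁] := he ▸ hJwA.mem_affineSpan
    have hcol := collinear_insert_of_mem_affineSpan_pair hmem
    rw [Set.insert_comm] at hcol
    exact hcol
  -- N4 : A, J, B not collinear
  have N4 : ¬ Collinear ℝ ({A, J, B} : Set (EuclideanSpace ℝ (Fin 2))) := by
    intro hc
    apply N1
    have hA₁line : A₁ ∈ line[ℝ, A, J] :=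
      (collinear_insert_of_mem_affineSpan_pair hJwA.mem_affineSpan).mem_affineSpan_of_mem_of_ne
        (by simp) (by simp) (by simp) (Ne.symm hJA')
    have hBline : B ∈ line[ℝ, A, J] :=
      hc.mem_affineSpan_of_mem_of_ne (by simp) (by simp) (by simp) (Ne.symm hJA')
    exact collinear_triple_of_mem_affineSpan_pair (left_mem_affineSpan_pair _ _ _) hBline hA₁line
  -- N7 : B, J, A₁ not collinear
  have N7 : ¬ Collinear ℝ ({B, J, A₁} : Set (EuclideanSpace ℝ (Fin 2))) := by
    intro hc
    apply N1
    have hAline : A ∈ line[ℝ, J, A₁] :=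
      (collinear_insert_of_mem_affineSpan_pair hJwA.mem_affineSpan).mem_affineSpan_of_mem_of_ne
        (by simp) (by simp) (by simp) hJA₁
    have hBline : B ∈ line[ℝ, J, A₁] :=
      hc.mem_affineSpan_of_mem_of_ne (by simp) (by simp) (by simp) hJA₁
    exact collinear_triple_of_mem_affineSpan_pair hAline hBline
      (right_mem_affineSpan_pair _ _ _)
  -- N8 : A, J, B₁ not collinear
  have N8 : ¬ Collinear ℝ ({A, J, B₁} : Set (EuclideanSpace ℝ (Fin 2))) := by
    intro hc
    apply N2
    have hBline : B ∈ line[ℝ, J, B₁] :=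
      (collinear_insert_of_mem_affineSpan_pair hJwB.mem_affineSpan).mem_affineSpan_of_mem_of_ne
        (by simp) (by simp) (by simp) hJB₁
    have hAline : A ∈ line[ℝ, J, B₁] :=
      hc.mem_affineSpan_of_mem_of_ne (by simp) (by simp) (by simp) hJB₁
    exact collinear_triple_of_mem_affineSpan_pair hAline hBline
      (right_mem_affineSpan_pair _ _ _)
  -- angles
  set a := ∠ B A A₁ with ha_def
  set b := ∠ A B B₁ with hb_def
  set θ := ∠ B J A₁ with hθ_def
  have hSbtwAJ : Sbtw ℝ A J A₁ := ⟨hJwA, hJA', hJA₁⟩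
  have hSbtwBJ : Sbtw ℝ B J B₁ := ⟨hJwB, hJB', hJB₁⟩
  have hpiA : ∠ A J A₁ = π := hSbtwAJ.angle₁₂₃_eq_pi
  have hpiB : ∠ B J B₁ = π := hSbtwBJ.angle₁₂₃_eq_pi
  -- vertical angles : ∠ A J B₁ = ∠ A₁ J B = θ
  have hvert : ∠ A J B₁ = θ := by
    have hpiB' : ∠ B₁ J B = π := by rw [angle_comm]; exact hpiB
    have hv2 := angle_eq_angle_of_angle_eq_pi_of_angle_eq_pi hpiA hpiB'
    rw [hθ_def, hv2, angle_comm]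
  -- ray identities
  have hBAJ : ∠ B A J = a := by rw [ha_def]; exact my_angle_ray hJwA hJA'
  have hJAB₁ : ∠ J A B₁ = a := by
    rw [my_angle_ray hB₁.wbtw hB₁A]
    have h1 : ∠ C A J = ∠ C A A₁ := my_angle_ray hJwA hJA'
    rw [angle_comm J A C, h1, angle_comm C A A₁, ← hA₁']
  have hABJ : ∠ A B J = b := by rw [hb_def]; exact my_angle_ray hJwB hJB'
  have hJBA₁ : ∠ J B A₁ = b := by
    rw [my_angle_ray hA₁.wbtw hA₁B]
    have h1 : ∠ C B J = ∠ C B B₁ := my_angle_ray hJwB hJB'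
    rw [angle_comm J B C, h1, angle_comm C B B₁, ← hB₁']
  have hABA₁ : ∠ A B A₁ = ∠ A B C := my_angle_ray hA₁.wbtw hA₁B
  have hBAB₁ : ∠ B A B₁ = ∠ B A C := my_angle_ray hB₁.wbtw hB₁A
  have hBA₁J : ∠ B A₁ J = ∠ B A₁ A := my_angle_ray hJwA.symm hJA₁
  have hAB₁J : ∠ A B₁ J = ∠ A B₁ B := my_angle_ray hJwB.symm hJB₁
  -- linear pair
  have hlpA : ∠ B J A + θ = π := by
    have h1 := angle_add_angle_eq_pi_of_angle_eq_pi B hpiA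
    rw [← hθ_def] at h1
    exact h1
  -- triangle sums
  have hθab : θ = a + b := by
    have t2 : ∠ A B J + ∠ B J A + ∠ J A B = π :=
      angle_add_angle_add_angle_eq_pi J (Ne.symm hAB)
    have h1 : ∠ J A B = a := by rw [angle_comm]; exact hBAJ
    rw [hABJ, h1] at t2
    linarith
  set u := ∠ J A₁ B with hu_def
  set v := ∠ J B₁ A with hv_def
  have E3 : θ + u + b = π := by
    have t3 : ∠ B J A₁ + ∠ J A₁ B + ∠ A₁ B J = π :=
      angle_add_angle_add_angle_eq_pi A₁ hJB'
    rw [angle_comm A₁ B J, hJBA₁, ← hθ_def, ← hu_def] at t3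
    exact t3
  have E4 : θ + v + a = π := by
    have t4 : ∠ A J B₁ + ∠ J B₁ A + ∠ B₁ A J = π :=
      angle_add_angle_add_angle_eq_pi B₁ hJA'
    rw [angle_comm B₁ A J, hJAB₁, hvert, ← hv_def] at t4
    exact t4
  have E5 : ∠ A B C + u + a = π := by
    have t5 : ∠ A B A₁ + ∠ B A₁ A + ∠ A₁ A B = π :=
      angle_add_angle_add_angle_eq_pi A₁ (Ne.symm hAB)
    rw [hABA₁, ← hBA₁J, angle_comm B A₁ J, angle_comm A₁ A B, ← ha_def, ← hu_def] at t5
    exact t5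
  have E6 : ∠ B A C + v + b = π := by
    have t6 : ∠ B A B₁ + ∠ A B₁ B + ∠ B₁ B A = π :=
      angle_add_angle_add_angle_eq_pi B₁ hAB
    rw [hBAB₁, ← hAB₁J, angle_comm A B₁ J, angle_comm B₁ B A, ← hb_def, ← hv_def] at t6
    exact t6
  -- distances nonzero
  have dJA : dist J A ≠ 0 := dist_ne_zero.2 hJA'
  have dJB : dist J B ≠ 0 := dist_ne_zero.2 hJB'
  have dJA₁ : dist J A₁ ≠ 0 := dist_ne_zero.2 hJA₁
  have dBA₁ : dist B A₁ ≠ 0 := dist_ne_zero.2 (Ne.symm hA₁B)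
  have dAB₁ : dist A B₁ ≠ 0 := dist_ne_zero.2 (Ne.symm hB₁A)
  -- law of sines
  have sinθpos : 0 < Real.sin θ := by rw [hθ_def]; exact sin_pos_of_not_collinear N7
  have S1 : Real.sin a * dist A B = Real.sin θ * dist J B := by
    have hls := my_law_sin A J B
    rw [angle_comm J A B, hBAJ] at hls
    have hAJB : ∠ A J B = π - θ := by rw [angle_comm]; linarith
    rw [hAJB, Real.sin_pi_sub, dist_comm A J] at hls
    apply mul_left_cancel₀ dJA
    linear_combination hls
  have S2 : Real.sin b * dist A B = Real.sin θ * dist J A := by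
    have hls := my_law_sin B J A
    rw [angle_comm J B A, hABJ] at hls
    have hBJA : ∠ B J A = π - θ := by linarith
    rw [hBJA, Real.sin_pi_sub, dist_comm B J, dist_comm B A] at hls
    apply mul_left_cancel₀ dJB
    linear_combination hls
  have S3 : Real.sin u * dist J A₁ = Real.sin b * dist J B := by
    have hls := my_law_sin A₁ B J
    rw [angle_comm B A₁ J, ← hu_def, angle_comm A₁ B J, hJBA₁,
      dist_comm A₁ B, dist_comm A₁ J, dist_comm B J] at hls
    apply mul_left_cancel₀ dBA₁
    linear_combination hls
  have S4 : Real.sin v * dist J B₁ = Real.sin a * dist J A := by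
    have hls := my_law_sin B₁ A J
    rw [angle_comm A B₁ J, ← hv_def, angle_comm B₁ A J, hJAB₁,
      dist_comm B₁ A, dist_comm B₁ J, dist_comm A J] at hls
    apply mul_left_cancel₀ dAB₁
    linear_combination hls
  -- combine : sin u = sin v
  have hsuv : Real.sin u = Real.sin v := by
    have k1 : Real.sin θ * (Real.sin u * dist J A₁) = Real.sin a * Real.sin b * dist A B := by
      rw [S3]
      linear_combination (-Real.sin b) * S1
    have k2 : Real.sin θ * (Real.sin v * dist J B₁) = Real.sin a * Real.sin b * dist A B := by
      rw [S4]
      linear_combination (-Real.sin a) * S2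
    rw [← h] at k2
    have k3 : Real.sin θ * dist J A₁ * Real.sin u = Real.sin θ * dist J A₁ * Real.sin v := by
      linear_combination k1 - k2
    exact mul_left_cancel₀ (mul_ne_zero (ne_of_gt sinθpos) dJA₁) k3
  -- u, v in (0, π)
  have hu0 : 0 < u := by
    rw [hu_def]; exact angle_pos_of_not_collinear (my_ncol_swap₂₃ (my_ncol_swap₁₂ N7))
  have hu1 : u < π := by
    rw [hu_def]; exact angle_lt_pi_of_not_collinear (my_ncol_swap₂₃ (my_ncol_swap₁₂ N7))
  have hv0 : 0 < v := by
    rw [hv_def]; exact angle_pos_of_not_collinear (my_ncol_swap₂₃ (my_ncol_swap₁₂ N8))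
  have hv1 : v < π := by
    rw [hv_def]; exact angle_lt_pi_of_not_collinear (my_ncol_swap₂₃ (my_ncol_swap₁₂ N8))
  have hACB : ∠ C A B + ∠ A B C + ∠ B C A = π :=
    angle_add_angle_add_angle_eq_pi B hAC
  rcases my_sin_eq_sin hu0 hu1 hv0 hv1 hsuv with he | he
  · -- u = v : isosceles, contradiction
    exfalso
    have hab : a = b := by linarith
    have hCA : dist C A = dist C B := by
      apply dist_eq_of_angle_eq_angle_of_angle_ne_pi
      · rw [angle_comm C A B, angle_comm C B A]
        linarith
      · exact angle_ne_pi_of_not_collinear (my_ncol_swap₂₃ hABC)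
    apply h2
    rw [dist_comm A C, dist_comm B C, hCA]
  · -- u + v = π : θ = π/3
    have hθ : θ = π / 3 := by linarith
    rw [angle_comm A C B]
    rw [angle_comm C A B] at hACB
    linarith
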